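/- Monotonicity used in the uniqueness proof for the power-law viscosity: for any two 3×3 real matrices D₁, D₂ with norm |A|² = (1/2) tr(Aᵀ A) and pairing A : B = tr(Aᵀ B), one has (|D₂|D₂ − |D₁|D₁) : (D₂ − D₁) ≥ (|D₂| + |D₁|)·(|D₂| − |D₁|)² ≥ 0. -/
import Mathlib


open Matrix

noncomputable def mpair (A B : Matrix (Fin 3) (Fin 3) ℝ) : ℝ := (Aᵀ * B).trace

noncomputable def mnorm (A : Matrix (Fin 3) (Fin 3) ℝ) : ℝ := Real.sqrt ((1 / 2) * mpair A A)

lemma mpair_eq (A B : Matrix (Fin 3) (Fin 3) ℝ) :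
    mpair A B = ∑ i, ∑ j, A j i * B j i := by
  simp [mpair, Matrix.trace, Matrix.mul_apply, Matrix.diag, Matrix.transpose_apply]

lemma mpair_nonneg (A : Matrix (Fin 3) (Fin 3) ℝ) : 0 ≤ mpair A A := by
  rw [mpair_eq]
  exact Finset.sum_nonneg fun i _ => Finset.sum_nonneg fun j _ => mul_self_nonneg _

lemma mpair_comm (A B : Matrix (Fin 3) (Fin 3) ℝ) : mpair A B = mpair B A := by
  simp [mpair_eq, mul_comm]

lemma mpair_cs (A B : Matrix (Fin 3) (Fin 3) ℝ) :
    (mpair A B) ^ 2 ≤ mpair A A * mpair B B := by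
  have h := Finset.sum_mul_sq_le_sq_mul_sq (Finset.univ ×ˢ Finset.univ)
    (fun p : Fin 3 × Fin 3 => A p.2 p.1) (fun p : Fin 3 × Fin 3 => B p.2 p.1)
  simpa [mpair_eq, Fintype.sum_prod_type, sq] using h

lemma mnorm_sq (A : Matrix (Fin 3) (Fin 3) ℝ) : (mnorm A) ^ 2 = (1 / 2) * mpair A A := by
  rw [mnorm, Real.sq_sqrt (by nlinarith [mpair_nonneg A])]

lemma mnorm_nonneg (A : Matrix (Fin 3) (Fin 3) ℝ) : 0 ≤ mnorm A := Real.sqrt_nonneg _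

theorem stmt_13 (D₁ D₂ : Matrix (Fin 3) (Fin 3) ℝ) :
    (mnorm D₂ + mnorm D₁) * (mnorm D₂ - mnorm D₁) ^ 2 ≤
      mpair (mnorm D₂ • D₂ - mnorm D₁ • D₁) (D₂ - D₁) ∧
    0 ≤ (mnorm D₂ + mnorm D₁) * (mnorm D₂ - mnorm D₁) ^ 2 := by
  set n₁ := mnorm D₁
  set n₂ := mnorm D₂
  have h1 : 0 ≤ n₁ := mnorm_nonneg D₁
  have h2 : 0 ≤ n₂ := mnorm_nonneg D₂
  have e1 : n₁ ^ 2 = (1 / 2) * mpair D₁ D₁ := mnorm_sq D₁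
  have e2 : n₂ ^ 2 = (1 / 2) * mpair D₂ D₂ := mnorm_sq D₂
  have hcs : (mpair D₁ D₂) ^ 2 ≤ mpair D₁ D₁ * mpair D₂ D₂ := mpair_cs D₁ D₂
  have hcs' : mpair D₁ D₂ ≤ 2 * n₁ * n₂ := by
    nlinarith [mpair_nonneg D₁, mpair_nonneg D₂, sq_nonneg (mpair D₁ D₂ - 2 * n₁ * n₂),
      mul_nonneg h1 h2]
  have hexp : mpair (n₂ • D₂ - n₁ • D₁) (D₂ - D₁)
      = n₂ * mpair D₂ D₂ - n₂ * mpair D₂ D₁ - n₁ * mpair D₁ D₂ + n₁ * mpair D₁ D₁ := by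
    simp only [mpair, Matrix.transpose_sub, Matrix.transpose_smul, Matrix.sub_mul,
      Matrix.smul_mul, Matrix.mul_sub, Matrix.trace_sub, Matrix.trace_smul, smul_eq_mul]
    ring
  constructor
  · rw [hexp, mpair_comm D₂ D₁]
    nlinarith [mul_nonneg (add_nonneg h1 h2) (sq_nonneg (n₁ - n₂))]
  · positivity
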